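/- Let X be a compact metric space of Hausdorff dimension d and let 0 < d' < d. Then there exist a constant C > 0 and a sequence (q_i)_{i≥1} of points of X such that d(q_i, q_j) ≥ C·i^{−1/d'} for all integers 1 ≤ i < j. -/

import Mathlib

open scoped ENNReal NNReal

open MeasureTheory Set

/-- Key lemma: if `μH[s] univ = ∞` and `0 < d' < s`, then there is `C > 0` such that for any
finitely many points `p 1, …, p (j-1)`, some point of `X` is at distance at least
`C * i ^ (-(1/d'))` from each `p i`. -/
lemma key_aux {X : Type*} [MetricSpace X] [MeasurableSpace X] [BorelSpace X] {d' s : ℝ} (hd'₀ : 0 < d') (hs : d' < s)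
    (hμ : μH[s] (Set.univ : Set X) = ∞) :
    ∃ C : ℝ, 0 < C ∧ ∀ (j : ℕ) (p : ℕ → X), ∃ x : X, ∀ i : ℕ, 1 ≤ i → i < j →
      C * (i : ℝ) ^ (-(1 / d')) ≤ dist (p i) x := by
  have hs0 : 0 < s := hd'₀.trans hs
  set I : ℝ≥0∞ → ℝ≥0∞ := fun r =>
    ⨅ (t : ℕ → Set X) (_ : (Set.univ : Set X) ⊆ ⋃ n, t n) (_ : ∀ n, EMetric.diam (t n) ≤ r),
      ∑' n, ⨆ _ : (t n).Nonempty, EMetric.diam (t n) ^ s with hI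
  have h1 : (1 : ℝ≥0∞) < ⨆ (r : ℝ≥0∞) (_ : 0 < r), I r := by
    simp only [hI, EMetric.diam]
    rw [← Measure.hausdorffMeasure_apply s (Set.univ : Set X), hμ]
    exact ENNReal.one_lt_top
  rw [lt_iSup_iff] at h1
  obtain ⟨r₀, h1⟩ := h1
  rw [lt_iSup_iff] at h1
  obtain ⟨hr₀, h1⟩ := h1
  -- pass to r₁ = min r₀ 1
  set r₁ : ℝ≥0∞ := min r₀ 1 with hr₁def
  have hr₁ : 0 < r₁ := lt_min hr₀ one_pos
  have hmono : I r₀ ≤ I r₁ := by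
    refine le_iInf fun t => le_iInf fun hc => le_iInf fun hd => ?_
    exact iInf_le_of_le t <| iInf_le_of_le hc <|
      iInf_le_of_le (fun n => (hd n).trans (min_le_left _ _)) le_rfl
  have h2 : (1 : ℝ≥0∞) < I r₁ := h1.trans_le hmono
  have hr₁top : r₁ ≠ ⊤ := ne_top_of_le_ne_top ENNReal.one_ne_top (min_le_right _ _)
  set ρ : ℝ := r₁.toReal with hρdef
  have hρ : 0 < ρ := ENNReal.toReal_pos hr₁.ne' hr₁top
  have hρ' : ENNReal.ofReal ρ = r₁ := ENNReal.ofReal_toReal hr₁top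
  -- the summable series
  have hsum : Summable (fun n : ℕ => ((n : ℝ) + 1) ^ (-(s / d'))) := by
    have h := (Real.summable_nat_rpow (p := -(s / d'))).2 (by
      rw [neg_lt_neg_iff]
      exact (one_lt_div hd'₀).2 hs)
    have := (summable_nat_add_iff 1).2 h
    simpa using this
  set T : ℝ := ∑' n : ℕ, ((n : ℝ) + 1) ^ (-(s / d')) with hT
  have hT0 : 0 ≤ T := tsum_nonneg fun n => Real.rpow_nonneg (by positivity) _
  set B : ℝ := (1 / (T + 1)) ^ (1 / s) with hB
  have hB0 : 0 < B := Real.rpow_pos_of_pos (by positivity) _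
  set C : ℝ := min ρ B / 2 with hC
  have hC0 : 0 < C := by positivity
  have h2C : 2 * C = min ρ B := by rw [hC]; ring
  have h2Cρ : 2 * C ≤ ρ := by rw [h2C]; exact min_le_left _ _
  have h2CB : 2 * C ≤ B := by rw [h2C]; exact min_le_right _ _
  have hCs : (2 * C) ^ s ≤ 1 / (T + 1) := by
    calc (2 * C) ^ s ≤ B ^ s := Real.rpow_le_rpow (by positivity) h2CB hs0.le
    _ = 1 / (T + 1) := by
        rw [hB, ← Real.rpow_mul (by positivity), one_div_mul_cancel hs0.ne', Real.rpow_one]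
  refine ⟨C, hC0, fun j p => ?_⟩
  by_contra hx
  push_neg at hx
  -- covering by closed balls
  set t : ℕ → Set X := fun n =>
    if n + 1 < j then Metric.closedBall (p (n + 1)) (C * ((n : ℝ) + 1) ^ (-(1 / d'))) else ∅
    with ht
  have hrn : ∀ n : ℕ, 0 < C * ((n : ℝ) + 1) ^ (-(1 / d')) := fun n => by positivity
  have hcov : (Set.univ : Set X) ⊆ ⋃ n, t n := by
    intro x _
    obtain ⟨i, hi1, hij, hdist⟩ := hx x
    obtain ⟨m, rfl⟩ := Nat.exists_eq_succ_of_ne_zero (by omega : i ≠ 0)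
    rw [Set.mem_iUnion]
    refine ⟨m, ?_⟩
    have hmj : m + 1 < j := by omega
    simp only [ht, if_pos hmj]
    rw [Metric.mem_closedBall, dist_comm]
    have : ((m : ℝ) + 1) = ((m + 1 : ℕ) : ℝ) := by push_cast; ring
    rw [this]
    exact hdist.le
  have hdiam : ∀ n, EMetric.diam (t n) ≤ ENNReal.ofReal (2 * (C * ((n : ℝ) + 1) ^ (-(1 / d')))) := by
    intro n
    by_cases h : n + 1 < j
    · simp only [ht, if_pos h]
      rw [← Metric.emetric_closedBall (hrn n).le]
      refine le_trans EMetric.diam_closedBall ?_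
      rw [ENNReal.ofReal_mul (by norm_num : (0:ℝ) ≤ 2), ENNReal.ofReal_ofNat]
    · simp [ht, if_neg h, EMetric.diam]
  have hdiam' : ∀ n, EMetric.diam (t n) ≤ r₁ := by
    intro n
    refine (hdiam n).trans ?_
    rw [← hρ']
    apply ENNReal.ofReal_le_ofReal
    have hle1 : ((n : ℝ) + 1) ^ (-(1 / d')) ≤ 1 :=
      Real.rpow_le_one_of_one_le_of_nonpos (by linarith [Nat.cast_nonneg (α := ℝ) n])
        (neg_nonpos.mpr (by positivity))
    calc 2 * (C * ((n : ℝ) + 1) ^ (-(1 / d'))) ≤ 2 * (C * 1) := by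
          apply mul_le_mul_of_nonneg_left _ (by norm_num)
          exact mul_le_mul_of_nonneg_left hle1 hC0.le
    _ = 2 * C := by ring
    _ ≤ ρ := h2Cρ
  -- bound the sum
  have hterm : ∀ n, (⨆ _ : (t n).Nonempty, EMetric.diam (t n) ^ s) ≤
      ENNReal.ofReal ((2 * C) ^ s * ((n : ℝ) + 1) ^ (-(s / d'))) := by
    intro n
    refine iSup_le fun _ => ?_
    calc EMetric.diam (t n) ^ s ≤
        (ENNReal.ofReal (2 * (C * ((n : ℝ) + 1) ^ (-(1 / d'))))) ^ s :=
          ENNReal.rpow_le_rpow (hdiam n) hs0.le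
    _ = ENNReal.ofReal ((2 * (C * ((n : ℝ) + 1) ^ (-(1 / d')))) ^ s) :=
          ENNReal.ofReal_rpow_of_nonneg (by positivity) hs0.le
    _ = ENNReal.ofReal ((2 * C) ^ s * ((n : ℝ) + 1) ^ (-(s / d'))) := by
          congr 1
          rw [show 2 * (C * ((n : ℝ) + 1) ^ (-(1 / d'))) =
              (2 * C) * ((n : ℝ) + 1) ^ (-(1 / d')) by ring,
            Real.mul_rpow (by positivity) (by positivity),
            ← Real.rpow_mul (by positivity)]
          congr 1
          field_simp
  have hfin : I r₁ ≤ ENNReal.ofReal ((2 * C) ^ s * T) := by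
    calc I r₁ ≤ ∑' n, ⨆ _ : (t n).Nonempty, EMetric.diam (t n) ^ s :=
          iInf_le_of_le t <| iInf_le_of_le hcov <| iInf_le_of_le hdiam' le_rfl
    _ ≤ ∑' n : ℕ, ENNReal.ofReal ((2 * C) ^ s * ((n : ℝ) + 1) ^ (-(s / d'))) :=
          ENNReal.tsum_le_tsum hterm
    _ = ENNReal.ofReal (∑' n : ℕ, (2 * C) ^ s * ((n : ℝ) + 1) ^ (-(s / d'))) :=
          (ENNReal.ofReal_tsum_of_nonneg (fun n => by positivity) (hsum.mul_left _)).symm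
    _ = ENNReal.ofReal ((2 * C) ^ s * T) := by rw [tsum_mul_left]
  have hlt1 : (2 * C) ^ s * T < 1 := by
    calc (2 * C) ^ s * T ≤ (1 / (T + 1)) * T := by
          apply mul_le_mul_of_nonneg_right hCs hT0
    _ < 1 := by
          rw [div_mul_eq_mul_div, one_mul, div_lt_one (by positivity)]
          linarith
  have : I r₁ < 1 := hfin.trans_lt (by
    rw [← ENNReal.ofReal_one]
    exact ENNReal.ofReal_lt_ofReal_iff_of_nonneg (by positivity) |>.2 hlt1)
  exact absurd h2 (not_lt.2 this.le)

/-- Lemma 6.1: a compact metric space of Hausdorff dimension `d` contains, for every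
`0 < d' < d`, a sequence of points `(q_i)_{i ≥ 1}` with `dist (q i) (q j) ≥ C i^{-1/d'}`
for all `1 ≤ i < j`. -/
theorem exists_separated_sequence_of_dimH
    {X : Type*} [MetricSpace X] [CompactSpace X]
    (d : ℝ≥0∞) (hd : dimH (Set.univ : Set X) = d)
    (d' : ℝ) (hd'₀ : 0 < d') (hd' : ENNReal.ofReal d' < d) :
    ∃ C : ℝ, 0 < C ∧ ∃ q : ℕ → X, ∀ i j : ℕ, 1 ≤ i → i < j →
      C * (i : ℝ) ^ (-(1 / d')) ≤ dist (q i) (q j) := by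
  borelize X
  obtain ⟨ε, hε1, hε2⟩ := exists_between hd'
  have hεtop : ε ≠ ⊤ := hε2.ne_top
  set s := ε.toReal with hsdef
  have hds : d' < s :=
    (ENNReal.ofReal_lt_iff_lt_toReal hd'₀.le hεtop).1 hε1
  have hμ : μH[s] (Set.univ : Set X) = ⊤ := by
    have hlt : (ε.toNNReal : ℝ≥0∞) < dimH (Set.univ : Set X) := by
      rw [hd, ENNReal.coe_toNNReal hεtop]; exact hε2
    exact hausdorffMeasure_of_lt_dimH hlt
  obtain ⟨C, hC0, key⟩ := key_aux hd'₀ hds hμ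
  have hne : Nonempty X := by
    obtain ⟨x, -⟩ := MeasureTheory.nonempty_of_measure_ne_zero
      (show μH[s] (Set.univ : Set X) ≠ 0 by rw [hμ]; exact ENNReal.top_ne_zero)
    exact ⟨x⟩
  choose F hF using key
  let x₀ : X := Classical.arbitrary X
  let g : ℕ → ℕ → X := fun n =>
    Nat.rec (fun _ => x₀) (fun m ih => Function.update ih (m + 1) (F (m + 1) ih)) n
  have hstep : ∀ m : ℕ, g (m + 1) = Function.update (g m) (m + 1) (F (m + 1) (g m)) :=
    fun m => rfl
  have hg : ∀ n k, k ≤ n → g n k = g k k := by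
    intro n
    induction n with
    | zero =>
      intro k hk
      have : k = 0 := by omega
      subst this; rfl
    | succ m ih =>
      intro k hk
      rcases Nat.lt_or_ge k (m + 1) with h | h
      · have : g (m + 1) k = g m k := by
          rw [hstep m]; exact Function.update_of_ne (by omega) _ _
        rw [this, ih k (by omega)]
      · have : k = m + 1 := by omega
        subst this; rfl
  refine ⟨C, hC0, fun n => g n n, fun i j h1 hij => ?_⟩
  cases j with
  | zero => omega
  | succ m =>
    have hq : g (m + 1) (m + 1) = F (m + 1) (g m) := by
      rw [hstep m]; exact Function.update_self _ _ _
    have h := hF (m + 1) (g m) i h1 hij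
    rwa [hg m i (by omega), ← hq] at h
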